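/- Let P = ⟨(2/3)^n : n ∈ ℕ⟩. Then P is atomic with A(P) = {(2/3)^n : n ∈ ℕ}, and ρ_k(P) = ∞ for every k ≥ 2. -/

import Mathlib

/-- A Puiseux monoid: an additive submonoid of ℚ consisting of nonnegative rationals. -/
def PM.Puiseux (P : AddSubmonoid ℚ) : Prop := ∀ x ∈ P, 0 ≤ x

/-- `a` is an atom of `P`. -/
def PM.IsAtom (P : AddSubmonoid ℚ) (a : ℚ) : Prop :=
  a ∈ P ∧ a ≠ 0 ∧ ∀ x ∈ P, ∀ y ∈ P, a = x + y → x = 0 ∨ y = 0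

/-- A factorization of `x` is a multiset of atoms of `P` summing to `x`. -/
def PM.IsFactorization (P : AddSubmonoid ℚ) (x : ℚ) (z : Multiset ℚ) : Prop :=
  (∀ a ∈ z, PM.IsAtom P a) ∧ z.sum = x

/-- The set of lengths of `x`. -/
def PM.Lengths (P : AddSubmonoid ℚ) (x : ℚ) : Set ℕ :=
  {n | ∃ z : Multiset ℚ, PM.IsFactorization P x z ∧ Multiset.card z = n}

/-- `P` is atomic: it is generated by its set of atoms. -/
def PM.Atomic (P : AddSubmonoid ℚ) : Prop :=
  AddSubmonoid.closure {a | PM.IsAtom P a} = P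

/-- The union of sets of lengths `U_k(P)`. -/
def PM.U (P : AddSubmonoid ℚ) (k : ℕ) : Set ℕ :=
  {l | ∃ x ∈ P, k ∈ PM.Lengths P x ∧ l ∈ PM.Lengths P x}


open Finset

lemma s11_not_three_dvd_two_pow (k : ℕ) : ¬ (3 ∣ 2^k) := by
  intro h
  have := Nat.Prime.dvd_of_dvd_pow Nat.prime_three h
  omega

lemma s11_key1 : ∀ (N : ℕ) (e : ℕ → ℕ) (m : ℕ), m ≤ N →
    (∑ n ∈ Finset.range (N+1), e n * (2^(n+1) * 3^(N-n))) = 2^(m+1) * 3^(N-m) →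
    ∀ n ≤ N, e n = if n = m then 1 else 0 := by
  intro N
  induction N with
  | zero =>
    intro e m hm heq n hn
    interval_cases m
    interval_cases n
    simp at heq ⊢
    omega
  | succ N IH =>
    intro e m hm heq n hn
    rw [Finset.sum_range_succ] at heq
    have hsplit : ∑ n ∈ Finset.range (N+1), e n * (2^(n+1) * 3^(N+1-n))
        = 3 * ∑ n ∈ Finset.range (N+1), e n * (2^(n+1) * 3^(N-n)) := by
      rw [Finset.mul_sum]
      apply Finset.sum_congr rfl
      intro i hi
      have : N + 1 - i = (N - i) + 1 := by
        have := Finset.mem_range.mp hi; omega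
      rw [this, pow_succ]; ring
    rw [hsplit] at heq
    set T := ∑ n ∈ Finset.range (N+1), e n * (2^(n+1) * 3^(N-n)) with hT
    rcases Nat.lt_or_ge m (N+1) with hmN | hmN
    · -- m ≤ N
      have hm' : m ≤ N := by omega
      have hRHS : 2^(m+1) * 3^(N+1-m) = 3 * (2^(m+1) * 3^(N-m)) := by
        have : N + 1 - m = (N - m) + 1 := by omega
        rw [this, pow_succ]; ring
      rw [hRHS] at heq
      have hdvd : 3 ∣ e (N+1) * (2^(N+1+1) * 3^(N+1-(N+1))) := by
        omega
      simp only [Nat.sub_self, pow_zero, mul_one] at hdvd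
      have hdvd2 : 3 ∣ e (N+1) := by
        rcases (Nat.Prime.dvd_mul Nat.prime_three).mp hdvd with h | h
        · exact h
        · exact absurd h (s11_not_three_dvd_two_pow _)
      obtain ⟨f, hf⟩ := hdvd2
      have heq2 : T + f * 2^(N+2) = 2^(m+1) * 3^(N-m) := by
        have h1 : e (N+1) * (2^(N+1+1) * 3^(N+1-(N+1))) = 3 * (f * 2^(N+2)) := by
          simp only [Nat.sub_self, pow_zero, mul_one]
          rw [hf]; ring
        omega
      set e' : ℕ → ℕ := Function.update e N (e N + 2*f) with he'
      have heq3 : (∑ n ∈ Finset.range (N+1), e' n * (2^(n+1) * 3^(N-n))) = 2^(m+1) * 3^(N-m) := by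
        have hTT : ∑ n ∈ Finset.range (N+1), e' n * (2^(n+1) * 3^(N-n))
            = T + f * 2^(N+2) := by
          rw [hT, Finset.sum_range_succ, Finset.sum_range_succ]
          have h1 : ∑ n ∈ Finset.range N, e' n * (2^(n+1) * 3^(N-n))
              = ∑ n ∈ Finset.range N, e n * (2^(n+1) * 3^(N-n)) := by
            apply Finset.sum_congr rfl
            intro i hi
            have : i ≠ N := by have := Finset.mem_range.mp hi; omega
            simp [he', Function.update, this]
          rw [h1]
          have h2 : e' N = e N + 2 * f := by simp [he']
          rw [h2]
          simp only [Nat.sub_self, pow_zero, mul_one]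
          have : (e N + 2*f) * 2^(N+1) = e N * 2^(N+1) + f * 2^(N+2) := by
            rw [pow_succ 2 (N+1)]; ring
          omega
        rw [hTT]; exact heq2
      have hres := IH e' m hm' heq3
      have hfN : e N + 2*f = if N = m then 1 else 0 := by
        have := hres N le_rfl
        simpa [he', Function.update] using this
      have hf0 : f = 0 := by by_cases h : N = m <;> simp [h] at hfN <;> omega
      rcases Nat.lt_or_ge n (N+1) with hnN | hnN
      · rcases Nat.lt_or_ge n N with hnN' | hnN'
        · have := hres n (by omega)
          have hne : n ≠ N := by omega
          simpa [he', Function.update, hne] using this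
        · have hnN'' : n = N := by omega
          subst hnN''
          omega
      · have hn' : n = N+1 := by omega
        subst hn'
        have hne2 : N+1 ≠ m := by omega
        simp only [hne2, if_false, hf, hf0]
    · -- m = N+1
      have hm' : m = N + 1 := by omega
      subst hm'
      simp only [Nat.sub_self, pow_zero, mul_one] at heq
      have hpow : 0 < 2^(N+1+1) := Nat.pow_pos (by norm_num)
      have he1 : e (N+1) = 1 := by
        rcases Nat.lt_or_ge (e (N+1)) 2 with h | h
        · have h01 : e (N+1) = 0 ∨ e (N+1) = 1 := by omega
          rcases h01 with he | he
          · exfalso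
            rw [he] at heq
            simp at heq
            exact s11_not_three_dvd_two_pow (N+1+1) ⟨T, heq.symm⟩
          · exact he
        · exfalso; nlinarith
      have hT0 : T = 0 := by
        rw [he1] at heq; omega
      have hall : ∀ i ∈ Finset.range (N+1), e i * (2^(i+1) * 3^(N-i)) = 0 :=
        (Finset.sum_eq_zero_iff).mp hT0
      rcases Nat.lt_or_ge n (N+1) with hnN | hnN
      · have := hall n (Finset.mem_range.mpr hnN)
        have h2 : 0 < 2^(n+1) * 3^(N-n) := by positivity
        have hne : n ≠ N+1 := by omega
        simp only [hne, if_false]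
        rcases Nat.mul_eq_zero.mp this with h | h
        · exact h
        · omega
      · have : n = N+1 := by omega
        subst this
        simp [he1]

lemma s11_conv (N n : ℕ) (hn : n ≤ N) :
    ((2:ℚ)/3)^(n+1) * 3^(N+1) = ((2^(n+1) * 3^(N-n) : ℕ) : ℚ) := by
  have h3 : (3:ℚ)^(N+1) = 3^(n+1) * 3^(N-n) := by
    rw [← pow_add]; congr 1; omega
  push_cast
  rw [div_pow, h3]
  have : ((3:ℚ)^(n+1)) ≠ 0 := by positivity
  field_simp

lemma s11_key2 (z : Multiset ℕ) (m : ℕ)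
    (h : (z.map (fun n => ((2:ℚ)/3)^(n+1))).sum = ((2:ℚ)/3)^(m+1)) : z = {m} := by
  set N := m + z.sum with hN
  have hmN : m ≤ N := by omega
  have hmem : ∀ n ∈ z, n ≤ N := by
    intro n hn
    have : n ≤ z.sum := Multiset.le_sum_of_mem hn
    omega
  have h1 : ∑ n ∈ Finset.range (N+1), z.count n • ((2:ℚ)/3)^(n+1) = ((2:ℚ)/3)^(m+1) := by
    rw [← h, Finset.sum_multiset_map_count]
    symm
    apply Finset.sum_subset
    · intro x hx
      rw [Multiset.mem_toFinset] at hx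
      exact Finset.mem_range.mpr (Nat.lt_succ_of_le (hmem x hx))
    · intro x _ hx
      rw [Multiset.mem_toFinset] at hx
      rw [Multiset.count_eq_zero_of_notMem hx, zero_smul]
  have h2 := congrArg (fun t : ℚ => t * 3^(N+1)) h1
  simp only [Finset.sum_mul] at h2
  have h3 : ∑ n ∈ Finset.range (N+1), ((z.count n * (2^(n+1) * 3^(N-n)) : ℕ) : ℚ)
      = ((2^(m+1) * 3^(N-m) : ℕ) : ℚ) := by
    rw [← s11_conv N m hmN, ← h2]
    apply Finset.sum_congr rfl
    intro i hi
    have hiN : i ≤ N := by have := Finset.mem_range.mp hi; omega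
    rw [Nat.cast_mul, ← s11_conv N i hiN, nsmul_eq_mul]
    ring
  rw [← Nat.cast_sum] at h3
  have h4 : (∑ n ∈ Finset.range (N+1), z.count n * (2^(n+1) * 3^(N-n))) = 2^(m+1) * 3^(N-m) :=
    Nat.cast_injective h3
  have h5 := s11_key1 N (fun n => z.count n) m hmN h4
  ext a
  rw [Multiset.count_singleton]
  rcases Nat.lt_or_ge a (N+1) with ha | ha
  · exact h5 a (by omega)
  · have ham : a ≠ m := by omega
    have : a ∉ z := fun hc => by have := hmem a hc; omega
    rw [Multiset.count_eq_zero_of_notMem this]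
    simp [ham]

lemma s11_fpos (n : ℕ) : (0:ℚ) < (2/3)^(n+1) := by positivity

lemma s11_memP (x : ℚ) :
    x ∈ AddSubmonoid.closure {q : ℚ | ∃ n : ℕ, q = (2/3 : ℚ)^(n+1)} ↔
      ∃ z : Multiset ℕ, (z.map (fun n => ((2:ℚ)/3)^(n+1))).sum = x := by
  constructor
  · intro hx
    induction hx using AddSubmonoid.closure_induction with
    | mem q hq =>
      obtain ⟨n, rfl⟩ := hq
      exact ⟨{n}, by simp⟩
    | zero => exact ⟨0, by simp⟩
    | add a b _ _ ha hb =>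
      obtain ⟨za, hza⟩ := ha
      obtain ⟨zb, hzb⟩ := hb
      exact ⟨za + zb, by rw [Multiset.map_add, Multiset.sum_add, hza, hzb]⟩
  · rintro ⟨z, rfl⟩
    apply AddSubmonoid.multiset_sum_mem
    intro a ha
    rw [Multiset.mem_map] at ha
    obtain ⟨n, _, rfl⟩ := ha
    exact AddSubmonoid.subset_closure ⟨n, rfl⟩

lemma s11_lenlemma : ∀ j : ℕ, ∃ n : ℕ, ∃ t : Multiset ℕ,
    (((Multiset.replicate 2 n + t).map (fun n => ((2:ℚ)/3)^(n+1))).sum = (4/3 : ℚ)) ∧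
    Multiset.card (Multiset.replicate 2 n + t) = j + 2 := by
  intro j
  induction j with
  | zero =>
    refine ⟨0, 0, ?_, ?_⟩
    · simp [Multiset.map_replicate]
      norm_num
    · simp
  | succ j IH =>
    obtain ⟨n, t, hsum, hcard⟩ := IH
    refine ⟨n + 1, (n+1) ::ₘ t, ?_, ?_⟩
    · rw [Multiset.map_add, Multiset.sum_add, Multiset.map_replicate, Multiset.sum_replicate] at hsum ⊢
      rw [Multiset.map_cons, Multiset.sum_cons]
      have h23 : (3:ℚ) * (2/3)^(n+1+1) = 2 * (2/3)^(n+1) := by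
        rw [pow_succ]; ring
      have hl : (2 : ℕ) • ((2:ℚ)/3)^(n+1+1) + (((2:ℚ)/3)^(n+1+1) + (t.map (fun n => ((2:ℚ)/3)^(n+1))).sum)
          = (2 : ℕ) • ((2:ℚ)/3)^(n+1) + (t.map (fun n => ((2:ℚ)/3)^(n+1))).sum := by
        simp only [nsmul_eq_mul, Nat.cast_ofNat]
        nlinarith [h23]
      rw [hl, hsum]
    · simp only [Multiset.card_add, Multiset.card_replicate, Multiset.card_cons] at hcard ⊢
      omega


theorem stmt11 :
    let A : Set ℚ := {q | ∃ n : ℕ, q = (2 / 3 : ℚ) ^ (n + 1)}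
    let P := AddSubmonoid.closure A
    PM.Atomic P ∧ {a : ℚ | PM.IsAtom P a} = A ∧
      ∀ k ≥ 2, (PM.U P k).Infinite := by
  intro A P
  have hatomA : ∀ m : ℕ, PM.IsAtom P ((2/3:ℚ)^(m+1)) := by
    intro m
    refine ⟨AddSubmonoid.subset_closure ⟨m, rfl⟩, ne_of_gt (s11_fpos m), ?_⟩
    intro x hx y hy hxy
    obtain ⟨zx, hzx⟩ := (s11_memP x).mp hx
    obtain ⟨zy, hzy⟩ := (s11_memP y).mp hy
    have hcomb : ((zx + zy).map (fun n => ((2:ℚ)/3)^(n+1))).sum = ((2:ℚ)/3)^(m+1) := by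
      rw [Multiset.map_add, Multiset.sum_add, hzx, hzy, hxy]
    have := s11_key2 _ _ hcomb
    have hcard : Multiset.card zx + Multiset.card zy = 1 := by
      have := congrArg Multiset.card this
      simpa using this
    rcases Nat.eq_zero_or_pos (Multiset.card zx) with h0 | h0
    · left
      rw [Multiset.card_eq_zero] at h0
      rw [← hzx, h0]; simp
    · right
      have : Multiset.card zy = 0 := by omega
      rw [Multiset.card_eq_zero] at this
      rw [← hzy, this]; simp
  have hatoms : {a : ℚ | PM.IsAtom P a} = A := by
    ext a
    constructor
    · rintro ⟨haP, ha0, hsplit⟩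
      obtain ⟨z, hz⟩ := (s11_memP a).mp haP
      have hzne : z ≠ 0 := by
        rintro rfl
        simp at hz
        exact ha0 hz.symm
      obtain ⟨n, hn⟩ := Multiset.exists_mem_of_ne_zero hzne
      obtain ⟨t, rfl⟩ := Multiset.exists_cons_of_mem hn
      rw [Multiset.map_cons, Multiset.sum_cons] at hz
      have hxP : ((2:ℚ)/3)^(n+1) ∈ P := AddSubmonoid.subset_closure ⟨n, rfl⟩
      have hyP : ((t.map (fun n => ((2:ℚ)/3)^(n+1))).sum) ∈ P := (s11_memP _).mpr ⟨t, rfl⟩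
      rcases hsplit _ hxP _ hyP hz.symm with h | h
      · exact absurd h (ne_of_gt (s11_fpos n))
      · exact ⟨n, by rw [← hz, h, add_zero]⟩
    · rintro ⟨n, rfl⟩
      exact hatomA n
  refine ⟨?_, hatoms, ?_⟩
  · unfold PM.Atomic
    rw [hatoms]
  · intro k hk
    have hsub : {l : ℕ | k ≤ l} ⊆ PM.U P k := by
      intro l hl
      simp only [Set.mem_setOf_eq] at hl
      refine ⟨(k:ℚ) * (2/3), ?_, ?_, ?_⟩
      · have : ((k:ℕ) : ℚ) * (2/3) = (k:ℕ) • ((2:ℚ)/3) := by rw [nsmul_eq_mul]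
        rw [this]
        have hmem23 : (2:ℚ)/3 ∈ P :=
          AddSubmonoid.subset_closure (show (2:ℚ)/3 ∈ A from ⟨0, by norm_num⟩)
        exact P.nsmul_mem hmem23 k
      · -- k ∈ Lengths
        refine ⟨Multiset.replicate k ((2:ℚ)/3), ⟨?_, ?_⟩, ?_⟩
        · intro a ha
          rw [Multiset.eq_of_mem_replicate ha]
          have := hatomA 0
          simpa using this
        · rw [Multiset.sum_replicate, nsmul_eq_mul]
        · exact Multiset.card_replicate _ _
      · -- l ∈ Lengths
        obtain ⟨n, t, hsum, hcard⟩ := s11_lenlemma (l - k)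
        refine ⟨(Multiset.replicate (k-2) 0 + (Multiset.replicate 2 n + t)).map
            (fun n => ((2:ℚ)/3)^(n+1)), ⟨?_, ?_⟩, ?_⟩
        · intro a ha
          rw [Multiset.mem_map] at ha
          obtain ⟨i, _, rfl⟩ := ha
          exact hatomA i
        · rw [Multiset.map_add, Multiset.sum_add, hsum, Multiset.map_replicate,
            Multiset.sum_replicate]
          have hc : ((k - 2 : ℕ) : ℚ) = (k : ℚ) - 2 := by
            have : (2:ℕ) ≤ k := hk
            push_cast [Nat.cast_sub this]
            ring
          rw [nsmul_eq_mul, hc]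
          norm_num
          ring
        · rw [Multiset.card_map, Multiset.card_add, Multiset.card_replicate, hcard]
          omega
    exact Set.Infinite.mono hsub (Set.Ici_infinite k)
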